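/- Let v, k, λ be positive integers with 3 ≤ k < v, and let r, d be the integers with λ(v−1) = r(k−1) − d and 0 ≤ d < k−1. If d < r − λ, then every (v,k,λ)-covering has at least ⌈v(r+1)/(k+1)⌉ blocks. -/
import Mathlib

open Finset

private lemma card_filter_eq_sum {α : Type*} (s : Finset α) (p : α → Prop) [DecidablePred p] :
    (s.filter p).card = ∑ a ∈ s, if p a then 1 else 0 := by
  rw [Finset.card_eq_sum_ones, Finset.sum_filter]

theorem stmt_10 (v k l r d : ℕ) (hl : 0 < l) (hk : 3 ≤ k) (hkv : k < v)
    (hrd : l * (v - 1) + d = r * (k - 1)) (hd : d < k - 1) (hdr : d + l < r)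
    (𝓑 : Multiset (Finset (Fin v)))
    (hblocks : ∀ b ∈ 𝓑, b.card = k)
    (hcov : ∀ u w : Fin v, u ≠ w → l ≤ 𝓑.countP (fun b => u ∈ b ∧ w ∈ b)) :
    (⌈(v * (r + 1) : ℚ) / (k + 1)⌉ : ℤ) ≤ (Multiset.card 𝓑 : ℤ) := by
  classical
  set n := Multiset.card 𝓑 with hn
  obtain ⟨f, hf⟩ : ∃ f : Fin n → Finset (Fin v),
      𝓑 = Multiset.map f Finset.univ.val := by
    refine ⟨fun i => 𝓑.toList.get (Fin.cast (hn ▸ 𝓑.length_toList.symm) i), ?_⟩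
    rw [Fin.univ_val_map, ← List.ofFn_congr (𝓑.length_toList.trans hn.symm) 𝓑.toList.get,
      List.ofFn_get, Multiset.coe_toList]
  have hcount : ∀ (p : Finset (Fin v) → Prop) [DecidablePred p],
      𝓑.countP p = ((univ : Finset (Fin n)).filter (fun i => p (f i))).card := by
    intro p hp
    conv_lhs => rw [hf]
    rw [Multiset.countP_map, Finset.card_def, Finset.filter_val]
  set Dg : Fin v → ℕ := fun x => ((univ : Finset (Fin n)).filter (fun i => x ∈ f i)).card
    with hDg
  set P : Fin v → Fin v → ℕ :=
    fun x y => ((univ : Finset (Fin n)).filter (fun i => x ∈ f i ∧ y ∈ f i)).card with hP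
  have hfk : ∀ i : Fin n, (f i).card = k := by
    intro i
    exact hblocks (f i) (by
      rw [hf]
      exact Multiset.mem_map_of_mem f (Finset.mem_val.mpr (Finset.mem_univ i)))
  have hcov' : ∀ x y : Fin v, x ≠ y → l ≤ P x y := by
    intro x y h
    have h2 := hcov x y h
    rwa [hcount (fun b => x ∈ b ∧ y ∈ b)] at h2
  have Psymm : ∀ x y : Fin v, P x y = P y x := by
    intro x y
    apply congrArg Finset.card
    ext i
    simp only [Finset.mem_filter]
    tauto
  have Pxx : ∀ x : Fin v, P x x = Dg x := by
    intro x
    apply congrArg Finset.card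
    ext i
    simp [Finset.mem_filter]
  -- L1
  have L1 : ∀ x : Fin v, ∑ y ∈ univ.erase x, P x y = Dg x * (k - 1) := by
    intro x
    calc ∑ y ∈ univ.erase x, P x y
        = ∑ y ∈ univ.erase x, ∑ i : Fin n, (if x ∈ f i ∧ y ∈ f i then 1 else 0) :=
          Finset.sum_congr rfl fun y _ => card_filter_eq_sum _ _
      _ = ∑ i : Fin n, ∑ y ∈ univ.erase x, (if x ∈ f i ∧ y ∈ f i then 1 else 0) :=
          Finset.sum_comm
      _ = ∑ i : Fin n, (if x ∈ f i then k - 1 else 0) := by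
          refine Finset.sum_congr rfl fun i _ => ?_
          by_cases hx : x ∈ f i
          · simp only [hx, true_and, if_true]
            rw [← card_filter_eq_sum]
            have he : (univ.erase x).filter (fun y => y ∈ f i) = (f i).erase x := by
              ext z
              simp only [Finset.mem_filter, Finset.mem_erase, Finset.mem_univ, true_and,
                and_true]
            rw [he, Finset.card_erase_of_mem hx, hfk i]
          · simp [hx]
      _ = Dg x * (k - 1) := by
          rw [Finset.sum_ite, Finset.sum_const_zero, add_zero, Finset.sum_const, smul_eq_mul,
            mul_comm]
  -- L2
  have L2 : ∀ x : Fin v, l * (v - 1) ≤ Dg x * (k - 1) := by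
    intro x
    rw [← L1 x]
    calc l * (v - 1) = ∑ _y ∈ univ.erase x, l := by
          rw [Finset.sum_const, smul_eq_mul, Finset.card_erase_of_mem (mem_univ x),
            Finset.card_univ, Fintype.card_fin, mul_comm]
      _ ≤ ∑ y ∈ univ.erase x, P x y :=
          Finset.sum_le_sum fun y hy => hcov' x y (Finset.ne_of_mem_erase hy).symm
  -- L3
  have L3 : ∀ x : Fin v, r ≤ Dg x := by
    intro x
    by_contra hc
    push_neg at hc
    have h2 : (Dg x + 1) * (k - 1) ≤ r * (k - 1) := Nat.mul_le_mul_right _ hc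
    have h4 : (Dg x + 1) * (k - 1) = Dg x * (k - 1) + (k - 1) := by ring
    have h3 := L2 x
    have h5 : k - 1 ≤ d := by
      have hA : Dg x * (k - 1) + (k - 1) ≤ Dg x * (k - 1) + d := by
        calc Dg x * (k - 1) + (k - 1) = (Dg x + 1) * (k - 1) := h4.symm
          _ ≤ l * (v - 1) + d := by rw [hrd]; exact h2
          _ ≤ Dg x * (k - 1) + d := Nat.add_le_add_right h3 d
      exact Nat.le_of_add_le_add_left hA
    omega
  -- L4
  have L4 : ∑ x : Fin v, Dg x = n * k := by
    calc ∑ x : Fin v, Dg x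
        = ∑ x : Fin v, ∑ i : Fin n, (if x ∈ f i then 1 else 0) :=
          Finset.sum_congr rfl fun x _ => card_filter_eq_sum _ _
      _ = ∑ i : Fin n, ∑ x : Fin v, (if x ∈ f i then 1 else 0) := Finset.sum_comm
      _ = ∑ _i : Fin n, k := by
          refine Finset.sum_congr rfl fun i _ => ?_
          rw [← card_filter_eq_sum]
          rw [show univ.filter (fun x => x ∈ f i) = f i from by ext z; simp]
          exact hfk i
      _ = n * k := by rw [Finset.sum_const, smul_eq_mul, Finset.card_univ, Fintype.card_fin]
  set T : Finset (Fin v) := univ.filter (fun x => Dg x = r) with hT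
  set t := T.card with ht
  have htv : t ≤ v := by
    calc t ≤ (univ : Finset (Fin v)).card := Finset.card_filter_le _ _
      _ = v := by rw [Finset.card_univ, Fintype.card_fin]
  -- L5
  set m := t - 1 with hm
  have L5 : ∀ x ∈ T, ∑ y ∈ T.erase x, P x y ≤ l * m + d := by
    intro x hx
    have hDx : Dg x = r := (Finset.mem_filter.mp hx).2
    have hsub : T.erase x ⊆ univ.erase x :=
      Finset.erase_subset_erase x (Finset.filter_subset _ _)
    have hsplit : ∑ y ∈ (univ.erase x) \ (T.erase x), P x y + ∑ y ∈ T.erase x, P x y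
        = ∑ y ∈ univ.erase x, P x y := Finset.sum_sdiff hsub
    have hrest : ((univ.erase x) \ (T.erase x)).card * l
        ≤ ∑ y ∈ (univ.erase x) \ (T.erase x), P x y := by
      calc ((univ.erase x) \ (T.erase x)).card * l
          = ∑ _y ∈ (univ.erase x) \ (T.erase x), l := by rw [Finset.sum_const, smul_eq_mul]
        _ ≤ _ := Finset.sum_le_sum fun y hy =>
            hcov' x y (Finset.ne_of_mem_erase (Finset.mem_sdiff.mp hy).1).symm
    have hcard : ((univ.erase x) \ (T.erase x)).card = (v - 1) - m := by
      rw [Finset.card_sdiff_of_subset hsub, Finset.card_erase_of_mem (mem_univ x),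
        Finset.card_erase_of_mem hx, Finset.card_univ, Fintype.card_fin]
    have htot : ∑ y ∈ univ.erase x, P x y = l * (v - 1) + d := by
      rw [L1 x, hDx, ← hrd]
    have h1t : 1 ≤ t := Finset.card_pos.mpr ⟨x, hx⟩
    have e1 : l * ((v - 1) - m) + l * m = l * (v - 1) := by
      rw [← Nat.mul_add]
      congr 1
      omega
    have hrest' : l * ((v - 1) - m) ≤ ∑ y ∈ (univ.erase x) \ (T.erase x), P x y := by
      rw [← hcard, mul_comm]; exact hrest
    set A := ∑ y ∈ T.erase x, P x y
    set B := ∑ y ∈ (univ.erase x) \ (T.erase x), P x y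
    set C1 := l * ((v - 1) - m)
    set C2 := l * m
    set C3 := l * (v - 1)
    -- hsplit : B + A = ∑univ ; htot : ∑univ = C3 + d ; hrest' : C1 ≤ B ; e1 : C1 + C2 = C3
    have : B + A = C3 + d := by rw [hsplit, htot]
    omega
  -- L6 : Fisher-type bound  t ≤ n
  have L6 : t ≤ n := by
    have hli : LinearIndependent ℚ
        (fun x : {a // a ∈ T} => (fun i : Fin n => if (x : Fin v) ∈ f i then (1 : ℚ) else 0)) := by
      rw [Fintype.linearIndependent_iff]
      intro c hc
      have h0 : ∀ i : Fin n,
          ∑ x : {a // a ∈ T}, c x * (if (x : Fin v) ∈ f i then (1:ℚ) else 0) = 0 := by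
        intro i
        have h1 := congrFun hc i
        simpa [Finset.sum_apply] using h1
      have expand : ∀ x y : Fin v, ((P x y : ℕ) : ℚ)
          = ∑ i : Fin n, (if x ∈ f i then (1:ℚ) else 0) * (if y ∈ f i then (1:ℚ) else 0) := by
        intro x y
        rw [hP, Finset.natCast_card_filter]
        refine Finset.sum_congr rfl fun i _ => ?_
        by_cases h1 : x ∈ f i <;> by_cases h2 : y ∈ f i <;> simp [h1, h2]
      have key : ∑ x : {a // a ∈ T}, ∑ y : {a // a ∈ T},
          c x * c y * ((P x.1 y.1 : ℕ) : ℚ) = 0 := by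
        calc ∑ x : {a // a ∈ T}, ∑ y : {a // a ∈ T}, c x * c y * ((P x.1 y.1 : ℕ):ℚ)
            = ∑ x : {a // a ∈ T}, ∑ y : {a // a ∈ T}, ∑ i : Fin n,
                (c x * (if (x:Fin v) ∈ f i then (1:ℚ) else 0))
                  * (c y * (if (y:Fin v) ∈ f i then (1:ℚ) else 0)) := by
              refine Finset.sum_congr rfl fun x _ => Finset.sum_congr rfl fun y _ => ?_
              rw [expand, Finset.mul_sum]
              exact Finset.sum_congr rfl fun i _ => by ring
          _ = ∑ x : {a // a ∈ T}, ∑ i : Fin n, ∑ y : {a // a ∈ T},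
                (c x * (if (x:Fin v) ∈ f i then (1:ℚ) else 0))
                  * (c y * (if (y:Fin v) ∈ f i then (1:ℚ) else 0)) :=
              Finset.sum_congr rfl fun x _ => Finset.sum_comm
          _ = ∑ i : Fin n, ∑ x : {a // a ∈ T}, ∑ y : {a // a ∈ T},
                (c x * (if (x:Fin v) ∈ f i then (1:ℚ) else 0))
                  * (c y * (if (y:Fin v) ∈ f i then (1:ℚ) else 0)) := Finset.sum_comm
          _ = ∑ i : Fin n, (∑ x : {a // a ∈ T}, c x * (if (x:Fin v) ∈ f i then (1:ℚ) else 0))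
                * (∑ y : {a // a ∈ T}, c y * (if (y:Fin v) ∈ f i then (1:ℚ) else 0)) :=
              Finset.sum_congr rfl fun i _ => (Finset.sum_mul_sum _ _ _ _).symm
          _ = 0 := Finset.sum_eq_zero fun i _ => by rw [h0 i, zero_mul]
      set S1 := ∑ x : {a // a ∈ T}, c x * c x with hS1
      set Sc := ∑ x : {a // a ∈ T}, c x with hSc
      have hS1nn : 0 ≤ S1 := Finset.sum_nonneg fun x _ => mul_self_nonneg _
      have hsum_sub : ∀ (G : Fin v → ℚ) (x : {a // a ∈ T}),
          ∑ y ∈ (univ : Finset {a // a ∈ T}).erase x, G y.1 = ∑ y ∈ T.erase x.1, G y := by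
        intro G x
        have h1 : G x.1 + ∑ y ∈ (univ : Finset {a // a ∈ T}).erase x, G y.1
            = ∑ y : {a // a ∈ T}, G y.1 :=
          Finset.add_sum_erase univ (fun y : {a // a ∈ T} => G y.1) (mem_univ x)
        have h2 : ∑ y : {a // a ∈ T}, G y.1 = ∑ y ∈ T, G y := Finset.sum_coe_sort T G
        have h3 : G x.1 + ∑ y ∈ T.erase x.1, G y = ∑ y ∈ T, G y :=
          Finset.add_sum_erase _ _ x.2
        linarith
      have hPdiag : ∀ x : {a // a ∈ T}, ((P x.1 x.1 : ℕ):ℚ) = (r:ℚ) := by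
        intro x
        rw [Pxx x.1, (Finset.mem_filter.mp x.2).2]
      have hexc : ∀ x : {a // a ∈ T},
          ∑ y ∈ (univ : Finset {a // a ∈ T}).erase x, ((P x.1 y.1 : ℕ):ℚ) - (l:ℚ) * (m:ℚ)
            ≤ (d:ℚ) := by
        intro x
        have hPsum : ∑ y ∈ (univ : Finset {a // a ∈ T}).erase x, ((P x.1 y.1 : ℕ):ℚ)
            ≤ (l:ℚ) * (m:ℚ) + (d:ℚ) := by
          rw [hsum_sub (fun y => ((P x.1 y : ℕ):ℚ)) x]
          exact_mod_cast L5 x.1 x.2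
        linarith
      have hcarde : ∀ x : {a // a ∈ T},
          ((univ : Finset {a // a ∈ T}).erase x).card = m := by
        intro x
        rw [Finset.card_erase_of_mem (mem_univ x), Finset.card_univ, Fintype.card_coe]
      have hexc' : ∀ x : {a // a ∈ T},
          ∑ y ∈ (univ : Finset {a // a ∈ T}).erase x, (((P x.1 y.1 : ℕ):ℚ) - (l:ℚ)) ≤ (d:ℚ) := by
        intro x
        have e0 : ∑ y ∈ (univ : Finset {a // a ∈ T}).erase x, (((P x.1 y.1 : ℕ):ℚ) - (l:ℚ))
            = (∑ y ∈ (univ : Finset {a // a ∈ T}).erase x, ((P x.1 y.1 : ℕ):ℚ)) - (m:ℚ) * l := by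
          rw [Finset.sum_sub_distrib, Finset.sum_const, hcarde x, nsmul_eq_mul]
        rw [e0]
        have := hexc x
        linarith
      -- pointwise lower bound for off-diagonal terms
      have hoff : ∀ x : {a // a ∈ T}, ∀ y ∈ (univ : Finset {a // a ∈ T}).erase x,
          (l:ℚ) * (c x * c y)
            - (c x * c x + c y * c y)/2 * (((P x.1 y.1 : ℕ):ℚ) - (l:ℚ))
          ≤ c x * c y * ((P x.1 y.1 : ℕ):ℚ) := by
        intro x y hy
        have hne : x.1 ≠ y.1 := fun h => (Finset.ne_of_mem_erase hy) (Subtype.ext h.symm)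
        have hPl : (l:ℚ) ≤ ((P x.1 y.1 : ℕ):ℚ) := by exact_mod_cast hcov' x.1 y.1 hne
        nlinarith [mul_nonneg (sq_nonneg (c x + c y)) (sub_nonneg.mpr hPl)]
      set OffSum := ∑ x : {a // a ∈ T}, ∑ y ∈ (univ : Finset {a // a ∈ T}).erase x,
          c x * c y * ((P x.1 y.1 : ℕ):ℚ) with hOff
      have split : ∑ x : {a // a ∈ T}, ∑ y : {a // a ∈ T}, c x * c y * ((P x.1 y.1 : ℕ):ℚ)
          = (r:ℚ) * S1 + OffSum := by
        have e3 : ∀ x : {a // a ∈ T}, ∑ y : {a // a ∈ T}, c x * c y * ((P x.1 y.1 : ℕ):ℚ)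
            = c x * c x * (r:ℚ)
              + ∑ y ∈ (univ : Finset {a // a ∈ T}).erase x, c x * c y * ((P x.1 y.1 : ℕ):ℚ) := by
          intro x
          rw [← Finset.add_sum_erase _ (fun y : {a // a ∈ T} => c x * c y * ((P x.1 y.1 : ℕ):ℚ))
            (mem_univ x)]
          rw [hPdiag x]
        rw [Finset.sum_congr rfl fun x _ => e3 x, Finset.sum_add_distrib, hOff, hS1]
        congr 1
        rw [Finset.mul_sum]
        exact Finset.sum_congr rfl fun x _ => by ring
      -- H1
      have H1 : ∑ x : {a // a ∈ T}, ∑ y ∈ (univ : Finset {a // a ∈ T}).erase x,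
          (l:ℚ) * (c x * c y) = (l:ℚ) * (Sc * Sc) - (l:ℚ) * S1 := by
        have e1 : ∀ x : {a // a ∈ T}, ∑ y ∈ (univ : Finset {a // a ∈ T}).erase x,
            (l:ℚ) * (c x * c y) = (l:ℚ) * c x * Sc - (l:ℚ) * (c x * c x) := by
          intro x
          have h1 : c x + ∑ y ∈ (univ : Finset {a // a ∈ T}).erase x, c y = Sc :=
            Finset.add_sum_erase _ _ (mem_univ x)
          calc ∑ y ∈ (univ : Finset {a // a ∈ T}).erase x, (l:ℚ) * (c x * c y)
              = ∑ y ∈ (univ : Finset {a // a ∈ T}).erase x, ((l:ℚ) * c x) * c y :=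
                Finset.sum_congr rfl fun y _ => by ring
            _ = ((l:ℚ) * c x) * ∑ y ∈ (univ : Finset {a // a ∈ T}).erase x, c y :=
                (Finset.mul_sum _ _ _).symm
            _ = ((l:ℚ) * c x) * (Sc - c x) := by
                rw [show (∑ y ∈ (univ : Finset {a // a ∈ T}).erase x, c y) = Sc - c x from by
                  linarith]
            _ = (l:ℚ) * c x * Sc - (l:ℚ) * (c x * c x) := by ring
        rw [Finset.sum_congr rfl fun x _ => e1 x, Finset.sum_sub_distrib]
        congr 1
        · rw [← Finset.sum_mul, ← Finset.mul_sum, ← hSc, mul_assoc]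
        · rw [← Finset.mul_sum, hS1]
      -- symmetry of the excess
      have hfull : ∀ (G : {a // a ∈ T} → {a // a ∈ T} → ℚ),
          ∑ x : {a // a ∈ T}, ∑ y ∈ (univ : Finset {a // a ∈ T}).erase x, G x y
          = (∑ x : {a // a ∈ T}, ∑ y : {a // a ∈ T}, G x y) - ∑ x : {a // a ∈ T}, G x x := by
        intro G
        rw [eq_sub_iff_add_eq, ← Finset.sum_add_distrib]
        refine Finset.sum_congr rfl fun x _ => ?_
        rw [add_comm]
        exact Finset.add_sum_erase _ _ (mem_univ x)
      have hepssymm : ∀ x y : {a // a ∈ T},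
          (((P y.1 x.1 : ℕ):ℚ) - (l:ℚ)) = (((P x.1 y.1 : ℕ):ℚ) - (l:ℚ)) := by
        intro x y
        rw [Psymm y.1 x.1]
      have hEsymm : ∑ x : {a // a ∈ T}, ∑ y ∈ (univ : Finset {a // a ∈ T}).erase x,
            c y * c y * (((P x.1 y.1 : ℕ):ℚ) - (l:ℚ))
          = ∑ x : {a // a ∈ T}, ∑ y ∈ (univ : Finset {a // a ∈ T}).erase x,
            c x * c x * (((P x.1 y.1 : ℕ):ℚ) - (l:ℚ)) := by
        rw [hfull, hfull]
        congr 1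
        rw [Finset.sum_comm]
        refine Finset.sum_congr rfl fun x _ => Finset.sum_congr rfl fun y _ => ?_
        rw [hepssymm x y]
      have H2 : ∑ x : {a // a ∈ T}, ∑ y ∈ (univ : Finset {a // a ∈ T}).erase x,
          (c x * c x + c y * c y)/2 * (((P x.1 y.1 : ℕ):ℚ) - (l:ℚ)) ≤ (d:ℚ) * S1 := by
        have e2 : ∑ x : {a // a ∈ T}, ∑ y ∈ (univ : Finset {a // a ∈ T}).erase x,
            (c x * c x + c y * c y)/2 * (((P x.1 y.1 : ℕ):ℚ) - (l:ℚ))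
            = ∑ x : {a // a ∈ T}, ∑ y ∈ (univ : Finset {a // a ∈ T}).erase x,
              c x * c x * (((P x.1 y.1 : ℕ):ℚ) - (l:ℚ)) := by
          have e2a : ∑ x : {a // a ∈ T}, ∑ y ∈ (univ : Finset {a // a ∈ T}).erase x,
              (c x * c x + c y * c y)/2 * (((P x.1 y.1 : ℕ):ℚ) - (l:ℚ))
              = (∑ x : {a // a ∈ T}, ∑ y ∈ (univ : Finset {a // a ∈ T}).erase x,
                  (c x * c x * (((P x.1 y.1 : ℕ):ℚ) - (l:ℚ))
                    + c y * c y * (((P x.1 y.1 : ℕ):ℚ) - (l:ℚ))))/2 := by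
            rw [Finset.sum_div]
            refine Finset.sum_congr rfl fun x _ => ?_
            rw [Finset.sum_div]
            exact Finset.sum_congr rfl fun y _ => by ring
          rw [e2a]
          rw [show ∑ x : {a // a ∈ T}, ∑ y ∈ (univ : Finset {a // a ∈ T}).erase x,
              (c x * c x * (((P x.1 y.1 : ℕ):ℚ) - (l:ℚ))
                + c y * c y * (((P x.1 y.1 : ℕ):ℚ) - (l:ℚ)))
              = ∑ x : {a // a ∈ T}, ∑ y ∈ (univ : Finset {a // a ∈ T}).erase x,
                  c x * c x * (((P x.1 y.1 : ℕ):ℚ) - (l:ℚ))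
                + ∑ x : {a // a ∈ T}, ∑ y ∈ (univ : Finset {a // a ∈ T}).erase x,
                  c y * c y * (((P x.1 y.1 : ℕ):ℚ) - (l:ℚ)) from by
            rw [← Finset.sum_add_distrib]
            exact Finset.sum_congr rfl fun x _ => by rw [← Finset.sum_add_distrib]]
          rw [hEsymm]
          ring
        rw [e2]
        calc ∑ x : {a // a ∈ T}, ∑ y ∈ (univ : Finset {a // a ∈ T}).erase x,
            c x * c x * (((P x.1 y.1 : ℕ):ℚ) - (l:ℚ))
            = ∑ x : {a // a ∈ T}, c x * c x
                * ∑ y ∈ (univ : Finset {a // a ∈ T}).erase x, (((P x.1 y.1 : ℕ):ℚ) - (l:ℚ)) :=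
              Finset.sum_congr rfl fun x _ => (Finset.mul_sum _ _ _).symm
          _ ≤ ∑ x : {a // a ∈ T}, c x * c x * (d:ℚ) :=
              Finset.sum_le_sum fun x _ =>
                mul_le_mul_of_nonneg_left (hexc' x) (mul_self_nonneg (c x))
          _ = (d:ℚ) * S1 := by rw [← Finset.sum_mul, hS1]; ring
      -- combine
      have hOffLB : ∑ x : {a // a ∈ T}, ∑ y ∈ (univ : Finset {a // a ∈ T}).erase x,
          ((l:ℚ) * (c x * c y)
            - (c x * c x + c y * c y)/2 * (((P x.1 y.1 : ℕ):ℚ) - (l:ℚ))) ≤ OffSum := by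
        rw [hOff]
        exact Finset.sum_le_sum fun x _ => Finset.sum_le_sum fun y hy => hoff x y hy
      have e4 : ∑ x : {a // a ∈ T}, ∑ y ∈ (univ : Finset {a // a ∈ T}).erase x,
            ((l:ℚ) * (c x * c y)
              - (c x * c x + c y * c y)/2 * (((P x.1 y.1 : ℕ):ℚ) - (l:ℚ)))
          = (∑ x : {a // a ∈ T}, ∑ y ∈ (univ : Finset {a // a ∈ T}).erase x,
              (l:ℚ) * (c x * c y))
            - ∑ x : {a // a ∈ T}, ∑ y ∈ (univ : Finset {a // a ∈ T}).erase x,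
              (c x * c x + c y * c y)/2 * (((P x.1 y.1 : ℕ):ℚ) - (l:ℚ)) := by
        rw [← Finset.sum_sub_distrib]
        exact Finset.sum_congr rfl fun x _ => by rw [← Finset.sum_sub_distrib]
      have hrQ : (d:ℚ) + (l:ℚ) + 1 ≤ (r:ℚ) := by exact_mod_cast (by omega : d + l + 1 ≤ r)
      have h7 : ((d:ℚ) + (l:ℚ) + 1) * S1 ≤ (r:ℚ) * S1 := mul_le_mul_of_nonneg_right hrQ hS1nn
      have h8 : 0 ≤ (l:ℚ) * (Sc * Sc) := mul_nonneg (by positivity) (mul_self_nonneg Sc)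
      have hS10 : S1 ≤ 0 := by
        rw [e4, H1] at hOffLB
        have h9 : (r:ℚ) * S1 + OffSum = 0 := by rw [← split]; exact key
        linarith [H2]
      have hS1z : ∑ x : {a // a ∈ T}, c x * c x = 0 := le_antisymm (hS1 ▸ hS10) (hS1 ▸ hS1nn)
      intro x
      have := (Finset.sum_eq_zero_iff_of_nonneg
        (fun x _ => mul_self_nonneg (c x))).mp hS1z x (mem_univ x)
      exact mul_self_eq_zero.mp this
    have hfin := hli.fintype_card_le_finrank
    rwa [Module.finrank_fintype_fun_eq_card, Fintype.card_fin, Fintype.card_coe] at hfin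
  -- L7 : final counting
  have hTsum : ∑ x ∈ T, Dg x = r * t := by
    rw [Finset.sum_congr rfl (fun x hx => (Finset.mem_filter.mp hx).2), Finset.sum_const,
      smul_eq_mul, mul_comm]
  have hsd : ∑ x ∈ univ \ T, Dg x + ∑ x ∈ T, Dg x = ∑ x : Fin v, Dg x :=
    Finset.sum_sdiff (Finset.filter_subset _ _)
  have hrest2 : (v - t) * (r + 1) ≤ ∑ x ∈ univ \ T, Dg x := by
    have hcard2 : ((univ : Finset (Fin v)) \ T).card = v - t := by
      rw [Finset.card_sdiff_of_subset (Finset.filter_subset _ _), Finset.card_univ, Fintype.card_fin]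
    calc (v - t) * (r + 1) = ∑ _x ∈ univ \ T, (r + 1) := by
          rw [Finset.sum_const, smul_eq_mul, hcard2]
      _ ≤ ∑ x ∈ univ \ T, Dg x := by
          refine Finset.sum_le_sum fun x hx => ?_
          have hne : Dg x ≠ r := fun h =>
            (Finset.mem_sdiff.mp hx).2 (Finset.mem_filter.mpr ⟨mem_univ x, h⟩)
          have := L3 x
          omega
  have L7 : v * (r + 1) ≤ n * (k + 1) := by
    have hA : (v - t) * (r + 1) + r * t ≤ n * k := by
      rw [← L4, ← hsd, hTsum]
      exact Nat.add_le_add_right hrest2 _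
    have e5 : (v - t) * (r + 1) + t * (r + 1) = v * (r + 1) := by
      rw [← Nat.add_mul]
      congr 1
      omega
    have e6 : t * (r + 1) = r * t + t := by ring
    calc v * (r + 1) = (v - t) * (r + 1) + (r * t + t) := by rw [← e5, e6]
      _ = ((v - t) * (r + 1) + r * t) + t := by ring
      _ ≤ n * k + t := Nat.add_le_add_right hA t
      _ ≤ n * k + n := Nat.add_le_add_left L6 _
      _ = n * (k + 1) := by ring
  have hQ : ((v * (r + 1) : ℕ) : ℚ) ≤ ((n * (k + 1) : ℕ) : ℚ) := Nat.cast_le.mpr L7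
  push_cast at hQ
  rw [Int.ceil_le, div_le_iff₀ (by positivity : (0:ℚ) < (k:ℚ) + 1)]
  push_cast
  linarith
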